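/- If x₂ ∈ ℂ and Q = (x+2x₂)(x−x₂)² (dx)² (a quadratic differential on ℂP¹ with a double zero at x₂, pole of order 7 at ∞), then the period ∫ from x₂ to −2x₂ of (x−x₂)√(x+2x₂) dx equals (12√3/5) x₂^{5/2} up to sign, and it is real if and only if x₂ lies on one of the five rays e^{2πik/5}·ℝ₊, k = 0,…,4. -/
import Mathlib

open Complex


lemma beta_val : (∫ t in (0:ℝ)..1, (t:ℂ) * ((1:ℂ) - t) ^ ((1:ℂ)/2)) = 4/15 := by
  have h1 : (∫ t in (0:ℝ)..1, (t:ℂ) * ((1:ℂ) - t) ^ ((1:ℂ)/2))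
      = Complex.betaIntegral 2 (3/2) := by
    rw [Complex.betaIntegral]
    apply intervalIntegral.integral_congr
    intro x hx
    norm_num [Complex.cpow_one]
  have h2 := Complex.Gamma_mul_Gamma_eq_betaIntegral (s := 2) (t := 3/2)
    (by norm_num) (by norm_num)
  have hhalf : Complex.Gamma (1/2) ≠ 0 := by
    apply Complex.Gamma_ne_zero
    intro m
    simp only [ne_eq]
    intro h
    have : ((1:ℂ)/2).re = (-(m:ℂ)).re := by rw [h]
    simp at this
    nlinarith [Nat.cast_nonneg (α := ℝ) m]
  have g2 : Complex.Gamma 2 = 1 := by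
    simpa using Complex.Gamma_ofNat_eq_factorial 1
  have g32 : Complex.Gamma (3/2) = (1/2) * Complex.Gamma (1/2) := by
    have := Complex.Gamma_add_one (1/2) (by norm_num)
    norm_num at this
    exact this
  have g52 : Complex.Gamma (5/2) = (3/2) * Complex.Gamma (3/2) := by
    have := Complex.Gamma_add_one (3/2) (by norm_num)
    norm_num at this
    exact this
  have g72 : Complex.Gamma (7/2) = (5/2) * Complex.Gamma (5/2) := by
    have := Complex.Gamma_add_one (5/2) (by norm_num)
    norm_num at this
    exact this
  have h72 : (2:ℂ) + 3/2 = 7/2 := by norm_num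
  rw [h72, g2, g32, g72, g52, g32] at h2
  rw [h1]
  have key : Complex.Gamma (1/2) * (Complex.betaIntegral 2 (3/2) - 4/15) = 0 := by
    linear_combination (-8/15 : ℂ) * h2
  rcases mul_eq_zero.mp key with h | h
  · exact absurd h hhalf
  · exact sub_eq_zero.mp h


lemma aux_integral_eq (x₂ : ℂ) (hx₂ : x₂ ≠ 0) :
    (∫ t in (0:ℝ)..1,
        ((x₂ * (1 - 3 * (t : ℂ)) - x₂) *
          ((3 * x₂) ^ ((1 : ℂ) / 2) * ((1 : ℂ) - (t : ℂ)) ^ ((1 : ℂ) / 2))) *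
          (-3 * x₂)) =
      ((12 * Real.sqrt 3 / 5 : ℝ) : ℂ) * x₂ ^ ((5 : ℂ) / 2) := by
  have step1 : (∫ t in (0:ℝ)..1,
        ((x₂ * (1 - 3 * (t : ℂ)) - x₂) *
          ((3 * x₂) ^ ((1 : ℂ) / 2) * ((1 : ℂ) - (t : ℂ)) ^ ((1 : ℂ) / 2))) *
          (-3 * x₂))
      = (9 * x₂^2 * (3 * x₂) ^ ((1:ℂ)/2)) * ∫ t in (0:ℝ)..1, (t:ℂ) * ((1:ℂ) - t) ^ ((1:ℂ)/2) := by
    rw [← intervalIntegral.integral_const_mul]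
    apply intervalIntegral.integral_congr
    intro x hx
    ring
  rw [step1, beta_val]
  -- (3x₂)^{1/2} = √3 * x₂^{1/2}
  have h3 : ((3:ℂ) * x₂) ^ ((1:ℂ)/2) = (Real.sqrt 3 : ℂ) * x₂ ^ ((1:ℂ)/2) := by
    have hne : (3:ℂ) * x₂ ≠ 0 := by simp [hx₂]
    rw [cpow_def_of_ne_zero hne, cpow_def_of_ne_zero hx₂]
    have hlog : Complex.log ((3:ℂ) * x₂) = (Real.log 3 : ℂ) + Complex.log x₂ := by
      have := Complex.log_ofReal_mul (r := 3) (by norm_num) hx₂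
      simpa using this
    rw [hlog, add_mul, Complex.exp_add]
    congr 1
    rw [← Complex.ofReal_one, ← Complex.ofReal_ofNat, ← Complex.ofReal_div,
      ← Complex.ofReal_mul, ← Complex.ofReal_exp]
    rw [show Real.sqrt 3 = (3:ℝ) ^ (1/2 : ℝ) from Real.sqrt_eq_rpow 3]
    rw [Real.rpow_def_of_pos (by norm_num)]
  have h52 : x₂ ^ ((5:ℂ)/2) = x₂ ^ 2 * x₂ ^ ((1:ℂ)/2) := by
    rw [show (5:ℂ)/2 = 2 + 1/2 by norm_num, Complex.cpow_add _ _ hx₂, Complex.cpow_two]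
  rw [h3, h52]
  push_cast
  ring


lemma aux_im_iff (x₂ : ℂ) (hx₂ : x₂ ≠ 0) :
    ((x₂ ^ ((5:ℂ)/2)).im = 0 ↔
      ∃ k : Fin 5, ∃ r : ℝ, 0 < r ∧
        x₂ = (r : ℂ) * Complex.exp (2 * (Real.pi : ℂ) * Complex.I * (k : ℕ) / 5)) := by
  set z := x₂ ^ ((5:ℂ)/2) with hz
  have hzz : z * z = x₂ ^ (5:ℕ) := by
    rw [hz, ← Complex.cpow_add _ _ hx₂]
    norm_num
  have hx5 : x₂ ^ (5:ℕ) ≠ 0 := pow_ne_zero _ hx₂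
  have hzne : z ≠ 0 := by
    intro h; rw [h, mul_zero] at hzz; exact hx5 hzz.symm
  have key : z.im = 0 ↔ ((x₂ ^ (5:ℕ)).im = 0 ∧ 0 < (x₂ ^ (5:ℕ)).re) := by
    rw [← hzz]
    constructor
    · intro h
      have hre : z.re ≠ 0 := by
        intro h'; exact hzne (Complex.ext h' h)
      constructor
      · simp [Complex.mul_im, h]
      · simp [Complex.mul_re, h]
        positivity
    · rintro ⟨h1, h2⟩
      simp [Complex.mul_im] at h1
      simp [Complex.mul_re] at h2
      rcases mul_eq_zero.mp (by linarith : z.re * z.im = 0) with h | h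
      · nlinarith
      · exact h
  rw [key]
  constructor
  · rintro ⟨h1, h2⟩
    set p : ℝ := (x₂ ^ (5:ℕ)).re with hp
    have hxp : x₂ ^ (5:ℕ) = (p:ℂ) := Complex.ext rfl (by simp [h1])
    set r : ℝ := p ^ ((1:ℝ)/5) with hr
    have hrpos : 0 < r := Real.rpow_pos_of_pos h2 _
    have hr5 : (r:ℝ) ^ (5:ℕ) = p := by
      rw [hr, ← Real.rpow_natCast (p ^ ((1:ℝ)/5)) 5, ← Real.rpow_mul h2.le]
      norm_num
    have hrne : (r:ℂ) ≠ 0 := by exact_mod_cast hrpos.ne'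
    have hdiv : (x₂ / r) ^ (5:ℕ) = 1 := by
      rw [div_pow, hxp]
      rw [show ((r:ℂ)^(5:ℕ)) = ((r^(5:ℕ) : ℝ):ℂ) by push_cast; ring, hr5]
      exact div_self (by exact_mod_cast h2.ne')
    obtain ⟨i, hi, hieq⟩ := (Complex.isPrimitiveRoot_exp 5 (by norm_num)).eq_pow_of_pow_eq_one hdiv
    refine ⟨⟨i, hi⟩, r, hrpos, ?_⟩
    push_cast at hieq
    have heq2 : Complex.exp (2 * (Real.pi:ℂ) * Complex.I / 5) ^ i
        = Complex.exp (2 * (Real.pi:ℂ) * Complex.I * i / 5) := by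
      rw [← Complex.exp_nat_mul]; ring_nf
    rw [heq2] at hieq
    simp only [Fin.val_mk]
    rw [hieq]
    field_simp
  · rintro ⟨k, r, hrpos, rfl⟩
    have hek : Complex.exp (2 * (Real.pi:ℂ) * Complex.I * (k:ℕ) / 5) ^ (5:ℕ)
        = 1 := by
      rw [← Complex.exp_nat_mul]
      rw [show (5:ℕ) * (2 * (Real.pi:ℂ) * Complex.I * (k:ℕ) / 5) = ((k:ℕ):ℂ) * (2 * Real.pi * Complex.I) by push_cast; ring]
      exact_mod_cast Complex.exp_int_mul_two_pi_mul_I (k:ℕ)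
    have : ((r:ℂ) * Complex.exp (2 * (Real.pi:ℂ) * Complex.I * (k:ℕ) / 5)) ^ (5:ℕ)
        = ((r ^ (5:ℕ) : ℝ) : ℂ) := by
      rw [mul_pow, hek, mul_one]; push_cast; ring
    refine ⟨?_, ?_⟩ <;> rw [this]
    · exact Complex.ofReal_im _
    · rw [Complex.ofReal_re]; positivity


/-- The period `∫_{x₂}^{−2x₂} (x−x₂)√(x+2x₂) dx` of `v = √Q`, `Q = (x+2x₂)(x−x₂)²(dx)²`,
computed along the straight segment `x(t) = x₂(1−3t)`, `t ∈ [0,1]`, with the continuous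
branch `√(x+2x₂) = (3x₂)^{1/2}(1−t)^{1/2}`. It equals `±(12√3/5) x₂^{5/2}`, and is real
iff `x₂` lies on one of the five rays `e^{2πik/5}·ℝ₊`. -/
theorem period_of_double_zero_differential (x₂ : ℂ) (hx₂ : x₂ ≠ 0) :
    (∃ s : ℂ, (s = 1 ∨ s = -1) ∧
      (∫ t in (0:ℝ)..1,
          ((x₂ * (1 - 3 * (t : ℂ)) - x₂) *
            ((3 * x₂) ^ ((1 : ℂ) / 2) * ((1 : ℂ) - (t : ℂ)) ^ ((1 : ℂ) / 2))) *
            (-3 * x₂)) =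
        s * ((12 * Real.sqrt 3 / 5 : ℝ) : ℂ) * x₂ ^ ((5 : ℂ) / 2)) ∧
    ((∫ t in (0:ℝ)..1,
          ((x₂ * (1 - 3 * (t : ℂ)) - x₂) *
            ((3 * x₂) ^ ((1 : ℂ) / 2) * ((1 : ℂ) - (t : ℂ)) ^ ((1 : ℂ) / 2))) *
            (-3 * x₂)).im = 0 ↔
      ∃ k : Fin 5, ∃ r : ℝ, 0 < r ∧
        x₂ = (r : ℂ) * Complex.exp (2 * (Real.pi : ℂ) * Complex.I * (k : ℕ) / 5)) := by
  have h1 := aux_integral_eq x₂ hx₂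
  constructor
  · exact ⟨1, Or.inl rfl, by rw [h1]; ring⟩
  · rw [h1]
    have him : (((12 * Real.sqrt 3 / 5 : ℝ) : ℂ) * x₂ ^ ((5:ℂ)/2)).im
        = (12 * Real.sqrt 3 / 5) * (x₂ ^ ((5:ℂ)/2)).im := by
      simp [Complex.mul_im]
    rw [him]
    have hc : (12 * Real.sqrt 3 / 5 : ℝ) ≠ 0 := by positivity
    rw [mul_eq_zero]
    simp only [hc, false_or]
    exact aux_im_iff x₂ hx₂
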